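/- arXiv:1705.02088 — 3 statements merged into one kernel-verified Lean document; each statement's English description precedes it below -/
import Mathlib

section
/- If s : ℝ → ℂ is differentiable, satisfies s′(x) − x·s(x) = 0 for every x ∈ ℝ, and is square-integrable with respect to Lebesgue measure on ℝ, then s is identically zero. -/
open MeasureTheory

/-- If `s : ℝ → ℂ` is differentiable, satisfies `s′(x) − x·s(x) = 0` for
every `x ∈ ℝ`, and is square-integrable with respect to Lebesgue measure on `ℝ`, then `s`
is identically zero. -/
theorem degree_one_ode_L2_vanishing (s : ℝ → ℂ) (hs : Differentiable ℝ s)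
    (heq : ∀ x : ℝ, deriv s x - (x : ℂ) * s x = 0)
    (hL2 : MemLp s 2 volume) :
    ∀ x : ℝ, s x = 0 := by
  -- g x = s x * exp(-x²/2) is constant
  set g : ℝ → ℂ := fun x => s x * Complex.exp (-(x : ℂ) ^ 2 / 2) with hg
  have he : ∀ x : ℝ, HasDerivAt (fun y : ℝ => Complex.exp (-(y : ℂ) ^ 2 / 2))
      (-(x : ℂ) * Complex.exp (-(x : ℂ) ^ 2 / 2)) x := by
    intro x
    have h1 : HasDerivAt (fun y : ℝ => (y : ℂ)) 1 x := Complex.ofRealCLM.hasDerivAt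
    have h2 : HasDerivAt (fun y : ℝ => -(y : ℂ) ^ 2 / 2) (-(x : ℂ)) x := by
      have h := ((h1.mul h1).neg).div_const 2
      simp only [pow_two]
      convert h using 1
      · rfl
      · rfl
      · ring
    have := h2.cexp
    convert this using 1
    ring
  have hgd : ∀ x : ℝ, HasDerivAt g 0 x := by
    intro x
    have hsx : HasDerivAt s ((x : ℂ) * s x) x := by
      have := (hs x).hasDerivAt
      rwa [show deriv s x = (x : ℂ) * s x by have := heq x; linear_combination this] at this
    have := hsx.mul (he x)
    convert this using 1
    · rfl
    · rfl
    · ring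
  have hconst : ∀ x : ℝ, g x = g 0 := by
    intro x
    have : ∀ y : ℝ, deriv g y = 0 := fun y => (hgd y).deriv
    exact is_const_of_deriv_eq_zero (fun y => (hgd y).differentiableAt) this x 0
  have hne : ∀ x : ℝ, Complex.exp (-(x : ℂ) ^ 2 / 2) ≠ 0 := fun x => Complex.exp_ne_zero _
  have hsx : ∀ x : ℝ, s x = s 0 * Complex.exp ((x : ℂ) ^ 2 / 2) := by
    intro x
    have h := hconst x
    simp only [hg, Complex.ofReal_zero] at h
    field_simp at h ⊢
    rw [show s 0 = s x * Complex.exp (-(x : ℂ) ^ 2 / 2) by rw [neg_div]; simpa using h.symm]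
    rw [mul_assoc, ← Complex.exp_add]
    ring_nf
    simp
  -- norm lower bound
  have hnorm : ∀ x : ℝ, ‖s 0‖ ≤ ‖s x‖ := by
    intro x
    rw [hsx x, norm_mul]
    have : Complex.exp ((x : ℂ) ^ 2 / 2) = ((Real.exp (x ^ 2 / 2) : ℝ) : ℂ) := by
      rw [Complex.ofReal_exp]; push_cast; ring_nf
    rw [this, Complex.norm_real, Real.norm_eq_abs, abs_of_pos (Real.exp_pos _)]
    nlinarith [Real.one_le_exp (by positivity : (0:ℝ) ≤ x ^ 2 / 2), norm_nonneg (s 0)]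
  -- if s 0 ≠ 0, contradiction with L²
  have hs0 : s 0 = 0 := by
    by_contra h0
    have hint : Integrable (fun x => ‖s x‖ ^ 2) volume :=
      (memLp_two_iff_integrable_sq_norm hL2.aestronglyMeasurable).1 hL2
    have hcint : Integrable (fun _ : ℝ => ‖s 0‖ ^ 2) volume := by
      refine hint.mono aestronglyMeasurable_const (ae_of_all _ fun x => ?_)
      simp only [Real.norm_eq_abs, abs_of_nonneg (by positivity : (0:ℝ) ≤ ‖s 0‖ ^ 2),
        abs_of_nonneg (by positivity : (0:ℝ) ≤ ‖s x‖ ^ 2)]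
      exact pow_le_pow_left₀ (norm_nonneg _) (hnorm x) 2
    rw [integrable_const_iff] at hcint
    rcases hcint with h | h
    · exact h0 (by simpa using h)
    · exact absurd (measure_lt_top volume (Set.univ : Set ℝ)) (by simp [Real.volume_univ])
  intro x
  rw [hsx x, hs0, zero_mul]
end

section
/- Let u, v : ℝ² → ℂ be continuous functions that are 1-periodic in the first variable, differentiable in the second variable, and satisfy ∂u/∂y(x, y) + y·u(x, y) = 0 and ∂v/∂y(x, y) − y·v(x, y) = 0 for all (x, y) ∈ ℝ², and suppose ∫_{[0,1]×ℝ} (|u(x,y)|² + |v(x,y)|²) dx dy < ∞. Then v = 0 and u(x, y) = u(x, 0)·exp(−y²/2) for all (x, y); that is, the L²-kernel of the operator (u, v) ↦ (−∂v/∂y + y·v, ∂u/∂y + y·u) on the cylinder (ℝ/ℤ) × ℝ is the space of functions of the form (x, y) ↦ (g(x)·exp(−y²/2), 0) with g square-integrable on ℝ/ℤ. -/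
open MeasureTheory

lemma ode_aux (f : ℝ → ℂ) (hf : Differentiable ℝ f) (ε : ℂ)
    (heq : ∀ y : ℝ, deriv f y = ε * y * f y) :
    ∀ y : ℝ, f y = f 0 * Complex.exp (ε * y ^ 2 / 2) := by
  set G : ℝ → ℂ := fun y => f y * Complex.exp (-ε * y ^ 2 / 2) with hG
  have HG : ∀ y : ℝ, HasDerivAt G 0 y := by
    intro y
    have h1 : HasDerivAt (fun y : ℝ => (y : ℂ)) 1 y := by
      simpa using (hasDerivAt_id y).ofReal_comp
    have h2 : HasDerivAt (fun y : ℝ => -ε * (y : ℂ) ^ 2 / 2) (-ε * y) y := by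
      have h2' := ((h1.mul h1).const_mul (-ε)).div_const 2
      have he : (fun x : ℝ => -ε * ((x : ℂ) * x) / 2) = fun y : ℝ => -ε * (y : ℂ) ^ 2 / 2 := by
        funext x; ring
      simp only [Pi.mul_apply] at h2'
      rw [he] at h2'
      exact h2'.congr_deriv (by ring)
    have h3 := h2.cexp
    have h4 : HasDerivAt f (ε * y * f y) y := by
      rw [← heq y]; exact (hf y).hasDerivAt
    have h5 := h4.mul h3
    exact h5.congr_deriv (by ring)
  have hconst : ∀ y, G y = G 0 := fun y =>
    is_const_of_deriv_eq_zero (fun z => (HG z).differentiableAt) (fun z => (HG z).deriv) y 0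
  intro y
  have h0 : G 0 = f 0 := by simp [hG]
  have h : f y * Complex.exp (-ε * y ^ 2 / 2) = f 0 := (hconst y).trans h0
  calc f y = f y * Complex.exp (-ε * y ^ 2 / 2) * Complex.exp (ε * y ^ 2 / 2) := by
        rw [mul_assoc, ← Complex.exp_add]
        ring_nf
        simp
    _ = f 0 * Complex.exp (ε * y ^ 2 / 2) := by rw [h]

/-- **Subsection 3.7.4 of the paper.** For continuous functions
`u, v : ℝ² → ℂ`, 1-periodic in the first variable, differentiable in the second variable,
satisfying `∂u/∂y + y·u = 0` and `∂v/∂y − y·v = 0` and square-integrable over `[0,1] × ℝ`,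
one has `v = 0` and `u(x, y) = u(x, 0)·exp(−y²/2)`: the `L²`-kernel of the operator
`(u, v) ↦ (−∂v/∂y + y·v, ∂u/∂y + y·u)` on the cylinder `(ℝ/ℤ) × ℝ` consists of the
functions `(x, y) ↦ (g(x)·exp(−y²/2), 0)`. -/
theorem L2_kernel_deformed_dirac_on_cylinder (u v : ℝ × ℝ → ℂ)
    (hu : Continuous u) (hv : Continuous v)
    (hup : ∀ x y : ℝ, u (x + 1, y) = u (x, y))
    (hvp : ∀ x y : ℝ, v (x + 1, y) = v (x, y))
    (hud : ∀ x : ℝ, Differentiable ℝ (fun y : ℝ => u (x, y)))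
    (hvd : ∀ x : ℝ, Differentiable ℝ (fun y : ℝ => v (x, y)))
    (hueq : ∀ x y : ℝ, deriv (fun y : ℝ => u (x, y)) y + (y : ℂ) * u (x, y) = 0)
    (hveq : ∀ x y : ℝ, deriv (fun y : ℝ => v (x, y)) y - (y : ℂ) * v (x, y) = 0)
    (hL2 : IntegrableOn (fun p : ℝ × ℝ => ‖u p‖ ^ 2 + ‖v p‖ ^ 2)
      (Set.Icc (0 : ℝ) 1 ×ˢ (Set.univ : Set ℝ)) volume) :
    (∀ p : ℝ × ℝ, v p = 0) ∧
      ∀ x y : ℝ, u (x, y) = u (x, 0) * Complex.exp (-(y : ℂ) ^ 2 / 2) := by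
  -- solve the ODEs
  have hu' : ∀ x y : ℝ, u (x, y) = u (x, 0) * Complex.exp ((-1 : ℂ) * y ^ 2 / 2) := by
    intro x
    exact ode_aux (fun y => u (x, y)) (hud x) (-1) (fun y => by linear_combination hueq x y)
  have hv' : ∀ x y : ℝ, v (x, y) = v (x, 0) * Complex.exp ((1 : ℂ) * y ^ 2 / 2) := by
    intro x
    exact ode_aux (fun y => v (x, y)) (hvd x) 1 (fun y => by linear_combination hveq x y)
  -- norm of v
  have hnv : ∀ x y : ℝ, ‖v (x, y)‖ = ‖v (x, 0)‖ * Real.exp (y ^ 2 / 2) := by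
    intro x y
    rw [hv' x y, norm_mul]
    congr 1
    have : (1 : ℂ) * (y : ℂ) ^ 2 / 2 = ((y ^ 2 / 2 : ℝ) : ℂ) := by push_cast; ring
    rw [this, Complex.norm_exp_ofReal]
  -- v vanishes on the zero section
  have hw0 : ∀ x : ℝ, v (x, 0) = 0 := by
    intro x0
    by_contra hx0
    set a : ℝ := Int.fract x0 with ha
    have hper : Function.Periodic (fun x => v (x, 0)) 1 := fun x => hvp x 0
    have hva : v (a, 0) = v (x0, 0) := by
      have h := hper.sub_int_mul_eq (x := x0) ⌊x0⌋
      have he : x0 - (⌊x0⌋ : ℝ) * 1 = a := by rw [mul_one, ha]; rfl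
      rw [he] at h
      exact h
    have hane : v (a, 0) ≠ 0 := hva ▸ hx0
    have ha0 : 0 ≤ a := Int.fract_nonneg x0
    have ha1 : a < 1 := Int.fract_lt_one x0
    set r : ℝ := ‖v (a, 0)‖ / 2 with hr
    have hrpos : 0 < r := by
      rw [hr]
      have := norm_pos_iff.mpr hane
      linarith
    -- continuity: find δ
    have hcw : Continuous fun x : ℝ => v (x, 0) :=
      hv.comp (continuous_id.prodMk continuous_const)
    have hc := Metric.continuous_iff.mp hcw a r hrpos
    obtain ⟨δ, hδpos, hδ⟩ := hc
    set δ' : ℝ := min (δ / 2) (1 - a) with hδ'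
    have hδ'pos : 0 < δ' := lt_min (by linarith) (by linarith)
    set s : Set ℝ := Set.Icc a (a + δ') with hs
    have hsub : s ⊆ Set.Icc (0 : ℝ) 1 := by
      intro x hx
      constructor
      · linarith [hx.1]
      · have := hx.2
        have : x ≤ a + (1 - a) := le_trans this (by gcongr; exact min_le_right _ _)
        linarith
    have hlow : ∀ x ∈ s, r ≤ ‖v (x, 0)‖ := by
      intro x hx
      have hd : dist x a < δ := by
        have h1 : 0 ≤ x - a := by linarith [hx.1]
        have h2 : x - a ≤ δ' := by linarith [hx.2]
        have h3 : δ' ≤ δ / 2 := min_le_left _ _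
        rw [Real.dist_eq, abs_of_nonneg h1]
        linarith
      have hd2 := hδ x hd
      rw [dist_eq_norm] at hd2
      have h4 : ‖v (a, 0)‖ - ‖v (x, 0)‖ ≤ ‖v (x, 0) - v (a, 0)‖ := by
        have := norm_sub_norm_le (v (a, 0)) (v (x, 0))
        rwa [norm_sub_rev] at this
      have h6 : ‖v (a, 0)‖ = 2 * r := by rw [hr]; ring
      linarith
    -- lower bound function is integrable on s ×ˢ univ
    set c : ℝ := r ^ 2 with hc
    have hcpos : 0 < c := by positivity
    have hmono : IntegrableOn (fun p : ℝ × ℝ => c * Real.exp (p.2 ^ 2))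
        (s ×ˢ (Set.univ : Set ℝ)) volume := by
      have hint : IntegrableOn (fun p : ℝ × ℝ => ‖u p‖ ^ 2 + ‖v p‖ ^ 2)
          (s ×ˢ (Set.univ : Set ℝ)) volume :=
        hL2.mono_set (Set.prod_mono hsub le_rfl)
      have hcf : Continuous fun p : ℝ × ℝ => c * Real.exp (p.2 ^ 2) :=
        continuous_const.mul (Real.continuous_exp.comp ((continuous_pow 2).comp continuous_snd))
      apply hint.mono' hcf.aestronglyMeasurable
      rw [ae_restrict_iff' (measurableSet_Icc.prod MeasurableSet.univ)]
      apply Filter.Eventually.of_forall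
      rintro ⟨x, y⟩ ⟨hx, -⟩
      have hb : ‖v (x, y)‖ ^ 2 = ‖v (x, 0)‖ ^ 2 * Real.exp (y ^ 2) := by
        rw [hnv x y, mul_pow]
        congr 1
        calc Real.exp (y ^ 2 / 2) ^ 2 = Real.exp (y ^ 2 / 2 + y ^ 2 / 2) := by
              rw [Real.exp_add]; ring
          _ = Real.exp (y ^ 2) := by norm_num
      have hge : c * Real.exp (y ^ 2) ≤ ‖v (x, y)‖ ^ 2 := by
        rw [hb, hc]
        have h5 : r ^ 2 ≤ ‖v (x, 0)‖ ^ 2 := by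
          nlinarith [hlow x hx, norm_nonneg (v (x, 0))]
        nlinarith [Real.exp_pos (y ^ 2)]
      have hnn : (0:ℝ) ≤ c * Real.exp (y ^ 2) := by positivity
      rw [Real.norm_eq_abs, abs_of_nonneg hnn]
      nlinarith [sq_nonneg ‖u (x, y)‖]
    -- Fubini gives integrability in y for some x, contradiction
    rw [IntegrableOn, MeasureTheory.Measure.volume_eq_prod, ← Measure.prod_restrict,
      Measure.restrict_univ] at hmono
    have hae := hmono.prod_right_ae
    have hsne : volume.restrict s ≠ 0 := by
      intro h
      have h2 : (volume.restrict s) s = 0 := by rw [h]; simp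
      rw [Measure.restrict_apply_self, hs, Real.volume_Icc] at h2
      simp at h2
      linarith
    haveI : (ae (volume.restrict s)).NeBot := ae_neBot.mpr hsne
    obtain ⟨x, hx⟩ := hae.exists
    have hconst : Integrable (fun _ : ℝ => c) volume := by
      apply hx.mono' aestronglyMeasurable_const
      apply Filter.Eventually.of_forall
      intro y
      rw [Real.norm_eq_abs, abs_of_nonneg hcpos.le]
      nlinarith [Real.one_le_exp (sq_nonneg y)]
    rw [integrable_const_iff] at hconst
    rcases hconst with h | h
    · exact hcpos.ne' h
    · haveI := h
      exact absurd (measure_lt_top (volume : Measure ℝ) Set.univ) (by simp [Real.volume_univ])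
  constructor
  · rintro ⟨x, y⟩
    rw [hv' x y, hw0 x, zero_mul]
  · intro x y
    rw [hu' x y]
    congr 2
    ring
end

section
/- Let A be an invertible symmetric real n × n matrix and let Θ be a real n × n matrix with Θ·Θ = 1 and Θ·A = −A·Θ. Let S be the positive-definite square root of A² (which exists since A² = AᵀA is positive definite). Then S is invertible, S⁻¹ commutes with A, and the matrix J := Θ·S⁻¹·A satisfies J·J = −1, i.e. J is a complex structure on ℝⁿ. -/
open Matrix

/-- If `M` commutes with `diagonal d`, and `e` is constant on the level sets of `d`,
then `M` commutes with `diagonal e`. -/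
lemma commute_diagonal_transfer {n : ℕ} {d e : Fin n → ℝ} (M : Matrix (Fin n) (Fin n) ℝ)
    (h : ∀ i j, d i = d j → e i = e j)
    (hc : M * diagonal d = diagonal d * M) : M * diagonal e = diagonal e * M := by
  ext i j
  have hd : M i j * d j = d i * M i j := by
    have := congrFun (congrFun hc i) j
    simpa [Matrix.mul_apply, Matrix.diagonal, Finset.sum_ite_eq, Finset.sum_ite_eq'] using this
  have hgoal : M i j * e j = e i * M i j := by
    rcases eq_or_ne (M i j) 0 with h0 | h0
    · simp [h0]
    · have hdd : d j = d i := mul_left_cancel₀ h0 (by rw [hd, mul_comm])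
      rw [h j i hdd, mul_comm]
  simpa [Matrix.mul_apply, Matrix.diagonal, Finset.sum_ite_eq, Finset.sum_ite_eq'] using hgoal

/-- **Subsection 3.4 of the paper.** Let `A` be an invertible symmetric real
`n × n` matrix and `Θ` a real `n × n` matrix with `Θ·Θ = 1` and `Θ·A = −A·Θ`.  Let `S` be
the positive-definite square root of `A²`.  Then `S` is invertible, `S⁻¹` commutes with
`A`, and `J := Θ·S⁻¹·A` satisfies `J·J = −1`, i.e. `J` is a complex structure on `ℝⁿ`. -/
theorem complex_structure_from_involution (n : ℕ)
    (A Θ S : Matrix (Fin n) (Fin n) ℝ)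
    (hA : A.IsSymm) (hAinv : IsUnit A)
    (hΘ : Θ * Θ = 1) (hΘA : Θ * A = -(A * Θ))
    (hS : S.PosDef) (hSsq : S * S = A * A) :
    IsUnit S ∧ S⁻¹ * A = A * S⁻¹ ∧ (Θ * S⁻¹ * A) * (Θ * S⁻¹ * A) = -1 := by
  have hH : A.IsHermitian := by rwa [Matrix.IsHermitian, conjTranspose_eq_transpose_of_trivial]
  set U : Matrix (Fin n) (Fin n) ℝ := (hH.eigenvectorUnitary : Matrix (Fin n) (Fin n) ℝ) with hU
  set ev : Fin n → ℝ := hH.eigenvalues with hev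
  have hUU : star U * U = 1 := (Matrix.mem_unitaryGroup_iff').mp hH.eigenvectorUnitary.2
  have hUU' : U * star U = 1 := (Matrix.mem_unitaryGroup_iff).mp hH.eigenvectorUnitary.2
  have hspec : A = U * diagonal ev * star U := by
    have := hH.spectral_theorem
    simpa [Function.comp] using this
  -- conjugation helpers
  have cmul : ∀ X Y : Matrix (Fin n) (Fin n) ℝ,
      (U * X * star U) * (U * Y * star U) = U * (X * Y) * star U := by
    intro X Y
    have h1 : star U * (U * Y * star U) = Y * star U := by
      rw [mul_assoc U Y, ← mul_assoc (star U) U, hUU, one_mul]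
    rw [mul_assoc (U * X) (star U), h1, ← mul_assoc, mul_assoc U X Y]
  have cancel : ∀ X : Matrix (Fin n) (Fin n) ℝ, star U * (U * X * star U) * U = X := by
    intro X
    rw [← mul_assoc, ← mul_assoc, hUU, one_mul, mul_assoc, hUU, mul_one]
  have conj_inj : ∀ X Y : Matrix (Fin n) (Fin n) ℝ,
      U * X * star U = U * Y * star U → X = Y := by
    intro X Y h
    have := congrArg (fun Z => star U * Z * U) h
    simpa [cancel] using this
  -- eigenvalues are nonzero
  have hdet : A.det ≠ 0 := ((Matrix.isUnit_iff_isUnit_det A).mp hAinv).ne_zero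
  have hevne : ∀ i, ev i ≠ 0 := by
    intro i hi
    apply hdet
    rw [hH.det_eq_prod_eigenvalues]
    exact Finset.prod_eq_zero (Finset.mem_univ i) hi
  set D1 : Matrix (Fin n) (Fin n) ℝ := diagonal (fun i => |ev i|) with hD1
  set D2 : Matrix (Fin n) (Fin n) ℝ := diagonal (fun i => ev i * ev i) with hD2
  have hAA : A * A = U * D2 * star U := by
    rw [hspec, cmul, diagonal_mul_diagonal]
  -- the positive square root of A²
  set T : Matrix (Fin n) (Fin n) ℝ := U * D1 * star U with hT
  have hTsemi : T.PosSemidef := by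
    have : D1.PosSemidef := posSemidef_diagonal_iff.mpr fun i => abs_nonneg _
    simpa [hT, star_eq_conjTranspose, mul_assoc] using this.mul_mul_conjTranspose_same U
  have hTsq : T * T = A * A := by
    have habs : (fun i => |ev i| * |ev i|) = (fun i => ev i * ev i) :=
      funext fun i => abs_mul_abs_self _
    rw [hT, cmul, hD1, diagonal_mul_diagonal, habs, ← hD2, hAA]
  have hST : S = T := by
    open scoped MatrixOrder in
    refine (CFC.sq_eq_sq_iff S T hS.posSemidef.nonneg hTsemi.nonneg).mp ?_
    rw [pow_two, pow_two, hTsq, hSsq]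
  -- S commutes with A
  have hSA : S * A = A * S := by
    have hcomm : (fun i => |ev i| * ev i) = (fun i => ev i * |ev i|) :=
      funext fun i => mul_comm _ _
    rw [hST, hT, hspec, cmul, cmul, hD1, diagonal_mul_diagonal, diagonal_mul_diagonal, hcomm]
  -- Θ commutes with A * A
  have hΘAA : Θ * (A * A) = (A * A) * Θ := by
    rw [← mul_assoc, hΘA, neg_mul, mul_assoc, hΘA, mul_neg, neg_neg, ← mul_assoc]
  set M : Matrix (Fin n) (Fin n) ℝ := star U * Θ * U with hM
  have hΘeq : Θ = U * M * star U := by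
    rw [hM]
    calc Θ = (U * star U) * Θ * (U * star U) := by rw [hUU']; simp
    _ = U * (star U * Θ * U) * star U := by simp only [mul_assoc]
  have hMd : M * D2 = D2 * M := by
    refine conj_inj _ _ ?_
    calc U * (M * D2) * star U = (U * M * star U) * (U * D2 * star U) := (cmul _ _).symm
    _ = Θ * (A * A) := by rw [← hΘeq, ← hAA]
    _ = (A * A) * Θ := hΘAA
    _ = (U * D2 * star U) * (U * M * star U) := by rw [← hΘeq, ← hAA]
    _ = U * (D2 * M) * star U := cmul _ _
  have hMabs : M * D1 = D1 * M := by
    refine commute_diagonal_transfer M (fun i j hij => ?_) hMd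
    have : Real.sqrt (ev i * ev i) = Real.sqrt (ev j * ev j) := by rw [hij]
    simpa [Real.sqrt_mul_self_eq_abs] using this
  have hΘS : Θ * S = S * Θ := by
    calc Θ * S = (U * M * star U) * (U * D1 * star U) := by rw [← hΘeq, hST, hT]
    _ = U * (M * D1) * star U := cmul _ _
    _ = U * (D1 * M) * star U := by rw [hMabs]
    _ = (U * D1 * star U) * (U * M * star U) := (cmul _ _).symm
    _ = S * Θ := by rw [← hΘeq, ← hT, ← hST]
  -- conclude
  have hSunit : IsUnit S := hS.isUnit
  have hSdet : IsUnit S.det := (Matrix.isUnit_iff_isUnit_det S).mp hSunit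
  have hSinv : S * S⁻¹ = 1 := Matrix.mul_nonsing_inv S hSdet
  have hSinv' : S⁻¹ * S = 1 := Matrix.nonsing_inv_mul S hSdet
  have hSinvA : S⁻¹ * A = A * S⁻¹ := by
    calc S⁻¹ * A = S⁻¹ * A * (S * S⁻¹) := by rw [hSinv, mul_one]
    _ = S⁻¹ * (A * S) * S⁻¹ := by simp only [mul_assoc]
    _ = S⁻¹ * (S * A) * S⁻¹ := by rw [hSA]
    _ = (S⁻¹ * S) * (A * S⁻¹) := by simp only [mul_assoc]
    _ = A * S⁻¹ := by rw [hSinv', one_mul]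
  have hΘSinv : Θ * S⁻¹ = S⁻¹ * Θ := by
    calc Θ * S⁻¹ = (S⁻¹ * S) * (Θ * S⁻¹) := by rw [hSinv', one_mul]
    _ = S⁻¹ * (S * Θ) * S⁻¹ := by simp only [mul_assoc]
    _ = S⁻¹ * (Θ * S) * S⁻¹ := by rw [hΘS]
    _ = (S⁻¹ * Θ) * (S * S⁻¹) := by simp only [mul_assoc]
    _ = S⁻¹ * Θ := by rw [hSinv, mul_one]
  refine ⟨hSunit, hSinvA, ?_⟩
  have hAΘ : A * Θ = -(Θ * A) := by rw [hΘA, neg_neg]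
  have hAdet : IsUnit (A * A).det := by
    rw [Matrix.det_mul]
    exact ((Matrix.isUnit_iff_isUnit_det A).mp hAinv).mul
      ((Matrix.isUnit_iff_isUnit_det A).mp hAinv)
  have hkey : S⁻¹ * (A * (S⁻¹ * A)) = 1 := by
    calc S⁻¹ * (A * (S⁻¹ * A)) = S⁻¹ * ((A * S⁻¹) * A) := by rw [← mul_assoc A]
    _ = S⁻¹ * ((S⁻¹ * A) * A) := by rw [← hSinvA]
    _ = (S⁻¹ * S⁻¹) * (A * A) := by simp only [mul_assoc]
    _ = (S * S)⁻¹ * (A * A) := by rw [Matrix.mul_inv_rev]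
    _ = (A * A)⁻¹ * (A * A) := by rw [hSsq]
    _ = 1 := Matrix.nonsing_inv_mul _ hAdet
  calc (Θ * S⁻¹ * A) * (Θ * S⁻¹ * A)
      = Θ * (S⁻¹ * ((A * Θ) * (S⁻¹ * A))) := by simp only [mul_assoc]
  _ = Θ * (S⁻¹ * (-(Θ * A) * (S⁻¹ * A))) := by rw [hAΘ]
  _ = -(Θ * ((S⁻¹ * Θ) * (A * (S⁻¹ * A)))) := by simp only [neg_mul, mul_neg, mul_assoc]
  _ = -(Θ * ((Θ * S⁻¹) * (A * (S⁻¹ * A)))) := by rw [← hΘSinv]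
  _ = -((Θ * Θ) * (S⁻¹ * (A * (S⁻¹ * A)))) := by simp only [mul_assoc]
  _ = -1 := by rw [hΘ, hkey, one_mul]
end
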